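/- If a core graph contains a 5-hole, then it has at most ten vertices. -/

import Mathlib

open SimpleGraph

namespace TP

/-- A set of vertices is independent: no two of its vertices are adjacent. -/
def IsIndep {V : Type*} (G : SimpleGraph V) (S : Set V) : Prop :=
  S.Pairwise fun u v => ¬ G.Adj u v

/-- The finite vertex set `s` induces a cycle of length `n` in `G`. -/
def IsInducedCycle {V : Type*} (G : SimpleGraph V) (n : ℕ) (s : Finset V) : Prop :=
  3 ≤ n ∧ s.card = n ∧ Nonempty (G.induce (s : Set V) ≃g SimpleGraph.cycleGraph n)

/-- The polytope `P(G)` given by nonnegativity, edge and odd-cycle inequalities. -/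
def tPolytope {V : Type*} [Fintype V] (G : SimpleGraph V) : Set (V → ℝ) :=
  {x | (∀ v, 0 ≤ x v ∧ x v ≤ 1) ∧
    (∀ ⦃u v⦄, G.Adj u v → x u + x v ≤ 1) ∧
    (∀ (n : ℕ) (s : Finset V), Odd n → IsInducedCycle G n s →
      ∑ v ∈ s, x v ≤ ((n : ℝ) - 1) / 2)}

/-- The independent set polytope: the convex hull of characteristic vectors of
independent sets. -/
def stabPolytope {V : Type*} [Fintype V] (G : SimpleGraph V) : Set (V → ℝ) :=
  convexHull ℝ {x | ∃ S : Set V, IsIndep G S ∧ x = S.indicator fun _ => (1 : ℝ)}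

/-- A graph is t-perfect if `P(G)` equals its independent set polytope. -/
def TPerfect {V : Type*} [Fintype V] (G : SimpleGraph V) : Prop :=
  tPolytope G = stabPolytope G

/-- The graph obtained from `G` by a t-contraction at `v` : the closed neighbourhood
of `v` is replaced by a single new vertex (`none`), adjacent to every vertex that had
a neighbour in the closed neighbourhood of `v`. -/
def tContract {V : Type*} (G : SimpleGraph V) (v : V) :
    SimpleGraph (Option {w : V // w ≠ v ∧ ¬ G.Adj v w}) :=
  SimpleGraph.fromRel fun a b =>
    match a, b with
    | some a, some b => G.Adj a.1 b.1
    | some a, none => ∃ x, (x = v ∨ G.Adj v x) ∧ G.Adj a.1 x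
    | none, _ => False

/-- A bundled finite simple graph. -/
structure FinGraph : Type 1 where
  V : Type
  [fintype : Fintype V]
  graph : SimpleGraph V

attribute [instance] FinGraph.fintype

def FinGraph.of {V : Type} [Fintype V] (G : SimpleGraph V) : FinGraph :=
  FinGraph.mk V G

/-- `B` is obtained from `A` by deleting one vertex (up to isomorphism). -/
def DeleteStep (A B : FinGraph) : Prop :=
  ∃ v : A.V, Nonempty (B.graph ≃g A.graph.induce {w | w ≠ v})

/-- `B` is obtained from `A` by a t-contraction at a vertex whose neighbourhood is
independent (up to isomorphism). -/
def ContractStep (A B : FinGraph) : Prop :=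
  ∃ v : A.V, IsIndep A.graph (A.graph.neighborSet v) ∧
    Nonempty (B.graph ≃g tContract A.graph v)

/-- One step: a vertex deletion or a t-contraction. -/
def Step (A B : FinGraph) : Prop := DeleteStep A B ∨ ContractStep A B

/-- `TMinor B A` : `B` is a t-minor of `A`, i.e. obtained from `A` by a sequence of
vertex deletions and t-contractions. -/
def TMinor (B A : FinGraph) : Prop := Relation.ReflTransGen Step A B

/-- `B` is a proper t-minor of `A` : a t-minor with fewer vertices. -/
def ProperTMinor (B A : FinGraph) : Prop :=
  TMinor B A ∧ Fintype.card B.V < Fintype.card A.V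

/-- A graph is minimally t-imperfect if it is not t-perfect but every proper t-minor
of it is t-perfect. -/
def MinimallyTImperfect {V : Type} [Fintype V] (G : SimpleGraph V) : Prop :=
  ¬ TPerfect G ∧ ∀ B : FinGraph, ProperTMinor B (FinGraph.of G) → TPerfect B.graph

/-- A core graph: every proper t-minor of `G` and every proper t-minor of its
complement is t-perfect. -/
def IsCore {V : Type} [Fintype V] (G : SimpleGraph V) : Prop :=
  (∀ B : FinGraph, ProperTMinor B (FinGraph.of G) → TPerfect B.graph) ∧
  (∀ B : FinGraph, ProperTMinor B (FinGraph.of Gᶜ) → TPerfect B.graph)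

/-- A partition of `V \ {v}` into `count` sets of size `size`, all satisfying `P`. -/
def CoverOff {V : Type*} (v : V) (count size : ℕ) (P : Finset V → Prop) : Prop :=
  ∃ f : Fin count → Finset V,
    (∀ i, P (f i) ∧ (f i).card = size) ∧
    (∀ i j, i ≠ j → Disjoint (f i) (f j)) ∧
    (∀ i, v ∉ f i) ∧
    (∀ w, w ≠ v → ∃ i, w ∈ f i)

/-- `(p,q)`-partitionable graphs. -/
def PQPartitionable {V : Type*} [Fintype V] (G : SimpleGraph V) (p q : ℕ) : Prop :=
  2 ≤ p ∧ 2 ≤ q ∧ Fintype.card V = p * q + 1 ∧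
  ∀ v : V,
    CoverOff v q p (fun S => IsIndep G (S : Set V)) ∧
    CoverOff v p q (fun S => G.IsClique (S : Set V))

/-- `G` has an odd hole: an induced odd cycle of length at least five. -/
def HasOddHole {V : Type*} (G : SimpleGraph V) : Prop :=
  ∃ (n : ℕ) (s : Finset V), Odd n ∧ 5 ≤ n ∧ IsInducedCycle G n s

/-- A graph is perfect iff neither it nor its complement has an odd hole. -/
def GPerfect {V : Type*} (G : SimpleGraph V) : Prop :=
  ¬ HasOddHole G ∧ ¬ HasOddHole Gᶜ

/-- Every vertex has degree at least three and at most five. -/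
def DegreeBounded {V : Type*} (G : SimpleGraph V) : Prop :=
  ∀ v, 3 ≤ (G.neighborSet v).ncard ∧ (G.neighborSet v).ncard ≤ 5

/-- The `n`-wheel: an `n`-cycle plus a vertex (`none`) adjacent to every cycle vertex. -/
def wheel (n : ℕ) : SimpleGraph (Option (Fin n)) :=
  SimpleGraph.fromRel fun a b =>
    match a, b with
    | some i, some j => (SimpleGraph.cycleGraph n).Adj i j
    | none, some _ => True
    | _, none => False

/-- Vertex type of the standard 9-vertex labeling: `inl i` is `v_{i+1}`,
`inr j` is `u_{j+1}`. -/
abbrev V9 := Fin 5 ⊕ Fin 4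

/-- Vertex type of the standard 10-vertex labeling. -/
abbrev V10 := Fin 5 ⊕ Fin 5

/-- The standard 9-vertex labeling: `v1 … v5` form a 5-hole; the neighbours of `u_i`
among the `v`'s are `v_{i+2}` and `v_{i+3}` together possibly with `v_i`. -/
def Std9 (G : SimpleGraph V9) : Prop :=
  (∀ i j : Fin 5, G.Adj (.inl i) (.inl j) ↔ (j = i + 1 ∨ i = j + 1)) ∧
  (∀ (i : Fin 4) (k : Fin 5), G.Adj (.inr i) (.inl k) →
    k = i.castSucc + 2 ∨ k = i.castSucc + 3 ∨ k = i.castSucc) ∧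
  (∀ i : Fin 4, G.Adj (.inr i) (.inl (i.castSucc + 2)) ∧ G.Adj (.inr i) (.inl (i.castSucc + 3)))

/-- The standard 10-vertex labeling. -/
def Std10 (G : SimpleGraph V10) : Prop :=
  (∀ i j : Fin 5, G.Adj (.inl i) (.inl j) ↔ (j = i + 1 ∨ i = j + 1)) ∧
  (∀ (i k : Fin 5), G.Adj (.inr i) (.inl k) → k = i + 2 ∨ k = i + 3 ∨ k = i) ∧
  (∀ i : Fin 5, G.Adj (.inr i) (.inl (i + 2)) ∧ G.Adj (.inr i) (.inl (i + 3)))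

/-- The 9-vertex graph of the standard labeling with prescribed `U`-edges and
prescribed extra edges `u_i v_i`. -/
def graph9 (uEdges : List (Fin 4 × Fin 4)) (extra : List (Fin 4)) : SimpleGraph V9 :=
  SimpleGraph.fromRel fun a b =>
    match a, b with
    | .inl i, .inl j => j = i + 1
    | .inr i, .inl k => k = i.castSucc + 2 ∨ k = i.castSucc + 3 ∨ (i ∈ extra ∧ k = i.castSucc)
    | .inl _, .inr _ => False
    | .inr i, .inr j => (i, j) ∈ uEdges

/-- The 10-vertex graph of the standard labeling with prescribed `U`-edges and
prescribed extra edges `u_i v_i`. -/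
def graph10 (uEdges : List (Fin 5 × Fin 5)) (extra : List (Fin 5)) : SimpleGraph V10 :=
  SimpleGraph.fromRel fun a b =>
    match a, b with
    | .inl i, .inl j => j = i + 1
    | .inr i, .inl k => k = i + 2 ∨ k = i + 3 ∨ (i ∈ extra ∧ k = i)
    | .inl _, .inr _ => False
    | .inr i, .inr j => (i, j) ∈ uEdges

/-- The graph `(12°435°1)`. -/
def G12435 : SimpleGraph V10 :=
  graph10 [(0,1),(1,3),(3,2),(2,4),(4,0)] [1,4]

/-- The graph `(1°2°435°1°)`. -/
def G12435' : SimpleGraph V10 :=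
  graph10 [(0,1),(1,3),(3,2),(2,4),(4,0)] [0,1,4]


-- cyc relation
def cyc (i j : Fin 5) : Prop := j = i + 1 ∨ i = j + 1

instance : DecidableRel cyc := fun i j => inferInstanceAs (Decidable (_ ∨ _))

lemma cycle5_adj : ∀ i j : Fin 5, (cycleGraph 5).Adj i j ↔ cyc i j := by decide

lemma cycle3_adj : ∀ i j : Fin 3, i ≠ j → (cycleGraph 3).Adj i j := by decide

/-- in an induced triangle, all pairs are adjacent -/
lemma triangle_pairwise {V : Type*} {G : SimpleGraph V} {t : Finset V}
    (h : IsInducedCycle G 3 t) : ∀ a ∈ t, ∀ b ∈ t, a ≠ b → G.Adj a b := by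
  obtain ⟨-, -, ⟨e⟩⟩ := h
  intro a ha b hb hab
  have h2 : (G.induce (t : Set V)).Adj ⟨a, ha⟩ ⟨b, hb⟩ := by
    rw [← e.map_adj_iff]
    apply cycle3_adj
    intro hc
    exact hab (congrArg Subtype.val (e.injective hc))
  exact h2

lemma mem_tPolytope_bump {V : Type*} [Fintype V] (G : SimpleGraph V) (b : V → ℝ)
    (hb0 : ∀ v, 0 ≤ b v) (hb3 : ∀ v, b v ≤ 1/3)
    (hbe : ∀ ⦃u v⦄, G.Adj u v → b u + b v ≤ 1/3)
    (hbsum : ∑ v, b v ≤ 1/3)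
    (htri : ∀ t : Finset V, IsInducedCycle G 3 t → ∀ v ∈ t, b v = 0) :
    (fun v => 1/3 + b v) ∈ tPolytope G := by
  refine ⟨fun v => ⟨by have := hb0 v; linarith, by have := hb3 v; linarith⟩,
    fun u v huv => by have := hbe huv; linarith, ?_⟩
  intro n t hodd hcyc
  have hcard : t.card = n := hcyc.2.1
  have hsplit : ∑ v ∈ t, (fun v => 1/3 + b v) v = (n : ℝ)/3 + ∑ v ∈ t, b v := by
    rw [Finset.sum_add_distrib, Finset.sum_const, ← hcard]
    push_cast
    ring
  rcases eq_or_lt_of_le hcyc.1 with h3 | h5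
  · -- n = 3
    have hb_zero : ∑ v ∈ t, b v = 0 :=
      Finset.sum_eq_zero (htri t (by rwa [← h3] at hcyc))
    rw [hsplit, hb_zero, ← h3]
    norm_num
  · -- n ≥ 5 since odd
    have h5' : 5 ≤ n := by
      obtain ⟨k, hk⟩ := hodd
      omega
    have hsub : ∑ v ∈ t, b v ≤ ∑ v, b v :=
      Finset.sum_le_sum_of_subset_of_nonneg (Finset.subset_univ t) (fun v _ _ => hb0 v)
    have h5r : (5 : ℝ) ≤ (n : ℝ) := by exact_mod_cast h5'
    rw [hsplit]
    linarith

lemma not_tPerfect_of_sep {V : Type*} [Fintype V] (G : SimpleGraph V) (x : V → ℝ)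
    (hx : x ∈ tPolytope G) (w : V → ℕ) (c : ℕ)
    (hind : ∀ S : Finset V, (∀ a ∈ S, ∀ b ∈ S, ¬ G.Adj a b) → ∑ v ∈ S, w v ≤ c)
    (hval : (c : ℝ) < ∑ v, (w v : ℝ) * x v) : ¬ TPerfect G := by
  classical
  intro h
  have hx' : x ∈ stabPolytope G := by rw [← h]; exact hx
  have hsub : stabPolytope G ⊆ {y : V → ℝ | ∑ v, (w v : ℝ) * y v ≤ (c : ℝ)} := by
    apply convexHull_min
    · rintro y ⟨S, hS, rfl⟩
      have : ∑ v, (w v : ℝ) * S.indicator (fun _ => (1:ℝ)) v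
          = ∑ v ∈ Finset.univ.filter (· ∈ S), (w v : ℝ) := by
        rw [Finset.sum_filter]
        apply Finset.sum_congr rfl
        intro v _
        by_cases hv : v ∈ S
        · simp [Set.indicator_of_mem hv, hv]
        · simp [Set.indicator_of_notMem hv, hv]
      simp only [Set.mem_setOf_eq]
      rw [this]
      have := hind (Finset.univ.filter (· ∈ S)) (by
        intro a ha b hb hab
        simp only [Finset.mem_filter] at ha hb
        by_cases h' : a = b
        · subst h'; exact G.irrefl hab
        · exact hS ha.2 hb.2 h' hab)
      calc ∑ v ∈ Finset.univ.filter (· ∈ S), (w v : ℝ)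
          = ((∑ v ∈ Finset.univ.filter (· ∈ S), w v : ℕ) : ℝ) := by push_cast; ring
        _ ≤ (c : ℝ) := by exact_mod_cast this
    · exact convex_halfSpace_le
        ⟨fun y z => by simp [mul_add, Finset.sum_add_distrib],
         fun r y => by simp [Finset.mul_sum, mul_comm, mul_left_comm, mul_assoc]⟩ _
  exact absurd (hsub hx') (by simpa using hval)


def mgraph (hub : List ℕ) : SimpleGraph (Fin 6) :=
  SimpleGraph.fromRel fun i j => (j.1 = i.1 + 1 ∧ j.1 ≤ 4) ∨ (i.1 = 4 ∧ j.1 = 0) ∨ (i.1 = 5 ∧ j.1 ∈ hub)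

instance (hub : List ℕ) : DecidableRel (mgraph hub).Adj := fun a b =>
  decidable_of_iff _ (SimpleGraph.fromRel_adj _ a b).symm

abbrev MW5 := mgraph [0,1,2,3,4]
abbrev MH3 := mgraph [0,1,2]
abbrev MH4 := mgraph [0,1,2,3]
/-- no_triangle and notTP lemmas, tested against p1 defs -/
lemma no_triangle_of {V : Type*} {G : SimpleGraph V} {v0 : V}
    (hnb : ∀ a b, G.Adj v0 a → G.Adj v0 b → a ≠ b → ¬ G.Adj a b) :
    ∀ t : Finset V, IsInducedCycle G 3 t → v0 ∉ t := by
  classical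
  intro t ht hv0
  obtain ⟨x, y, z, hxy, hxz, hyz, ht3⟩ := Finset.card_eq_three.1 ht.2.1
  rw [ht3] at hv0
  rw [ht3] at ht
  have hp := triangle_pairwise ht
  clear ht3
  have hx : x ∈ ({x, y, z} : Finset V) := by simp
  have hy : y ∈ ({x, y, z} : Finset V) := by simp
  have hz : z ∈ ({x, y, z} : Finset V) := by simp
  simp only [Finset.mem_insert, Finset.mem_singleton] at hv0
  rcases hv0 with rfl | rfl | rfl
  · exact hnb y z (hp _ hx _ hy hxy) (hp _ hx _ hz hxz) hyz (hp _ hy _ hz hyz)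
  · exact hnb x z (hp _ hy _ hx (Ne.symm hxy)) (hp _ hy _ hz hyz) hxz (hp _ hx _ hz hxz)
  · exact hnb x y (hp _ hz _ hx (Ne.symm hxz)) (hp _ hz _ hy (Ne.symm hyz)) hxy (hp _ hx _ hy hxy)

lemma notTP_K4 : ¬ TPerfect (⊤ : SimpleGraph (Fin 4)) := by
  apply not_tPerfect_of_sep _ (fun v => 1/3 + 0) ?_ (fun _ => 1) 1 ?_ ?_
  · exact mem_tPolytope_bump _ (fun _ => 0) (fun _ => le_refl _) (by norm_num)
      (fun u v _ => by norm_num) (by simp) (fun t _ v _ => rfl)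
  · decide
  · simp [Fin.sum_univ_four]; norm_num

lemma notTP_MW5 : ¬ TPerfect MW5 := by
  apply not_tPerfect_of_sep _ (fun v => 1/3 + 0) ?_ (fun v => if v.1 = 5 then 2 else 1) 2 ?_ ?_
  · exact mem_tPolytope_bump _ (fun _ => 0) (fun _ => le_refl _) (by norm_num)
      (fun u v _ => by norm_num) (by simp) (fun t _ v _ => rfl)
  · decide
  · rw [Fin.sum_univ_six]; norm_num [show ((0:Fin 6):ℕ) = 0 from rfl, show ((1:Fin 6):ℕ) = 1 from rfl, show ((2:Fin 6):ℕ) = 2 from rfl, show ((3:Fin 6):ℕ) = 3 from rfl, show ((4:Fin 6):ℕ) = 4 from rfl, show ((5:Fin 6):ℕ) = 5 from rfl]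

lemma notTP_MH3 : ¬ TPerfect MH3 := by
  have h3 := no_triangle_of (G := MH3) (v0 := 3) (by decide)
  have h4 := no_triangle_of (G := MH3) (v0 := 4) (by decide)
  apply not_tPerfect_of_sep _
    (fun v => 1/3 + (if v.1 = 3 ∨ v.1 = 4 then 1/6 else 0)) ?_ (fun _ => 1) 2 ?_ ?_
  · apply mem_tPolytope_bump
    · intro v; split <;> norm_num
    · intro v; split <;> norm_num
    · intro u v _
      have h1 : (if u.1 = 3 ∨ u.1 = 4 then (1:ℝ)/6 else 0) ≤ 1/6 := by split <;> norm_num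
      have h2 : (if v.1 = 3 ∨ v.1 = 4 then (1:ℝ)/6 else 0) ≤ 1/6 := by split <;> norm_num
      linarith
    · rw [Fin.sum_univ_six]; norm_num [show ((0:Fin 6):ℕ) = 0 from rfl, show ((1:Fin 6):ℕ) = 1 from rfl, show ((2:Fin 6):ℕ) = 2 from rfl, show ((3:Fin 6):ℕ) = 3 from rfl, show ((4:Fin 6):ℕ) = 4 from rfl, show ((5:Fin 6):ℕ) = 5 from rfl]
    · intro t ht v hv
      have hv3 : v ≠ 3 := fun h => h3 t ht (h ▸ hv)
      have hv4 : v ≠ 4 := fun h => h4 t ht (h ▸ hv)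
      have : ¬ (v.1 = 3 ∨ v.1 = 4) := by
        rintro (h | h)
        · exact hv3 (Fin.ext h)
        · exact hv4 (Fin.ext h)
      simp [this]
  · decide
  · rw [Fin.sum_univ_six]; norm_num [show ((0:Fin 6):ℕ) = 0 from rfl, show ((1:Fin 6):ℕ) = 1 from rfl, show ((2:Fin 6):ℕ) = 2 from rfl, show ((3:Fin 6):ℕ) = 3 from rfl, show ((4:Fin 6):ℕ) = 4 from rfl, show ((5:Fin 6):ℕ) = 5 from rfl]

lemma notTP_MH4 : ¬ TPerfect MH4 := by
  have h4 := no_triangle_of (G := MH4) (v0 := 4) (by decide)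
  apply not_tPerfect_of_sep _
    (fun v => 1/3 + (if v.1 = 4 then 1/3 else 0)) ?_ (fun _ => 1) 2 ?_ ?_
  · apply mem_tPolytope_bump
    · intro v; split <;> norm_num
    · intro v; split <;> norm_num
    · intro u v huv
      have hne : u ≠ v := huv.ne
      split_ifs with hu hv hv
      · exact absurd (Fin.ext (hu.trans hv.symm)) hne
      · norm_num
      · norm_num
      · norm_num
    · rw [Fin.sum_univ_six]; norm_num [show ((0:Fin 6):ℕ) = 0 from rfl, show ((1:Fin 6):ℕ) = 1 from rfl, show ((2:Fin 6):ℕ) = 2 from rfl, show ((3:Fin 6):ℕ) = 3 from rfl, show ((4:Fin 6):ℕ) = 4 from rfl, show ((5:Fin 6):ℕ) = 5 from rfl]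
    · intro t ht v hv
      have hv4 : v ≠ 4 := fun h => h4 t ht (h ▸ hv)
      have : ¬ (v.1 = 4) := fun h => hv4 (Fin.ext h)
      simp [this]
  · decide
  · rw [Fin.sum_univ_six]; norm_num [show ((0:Fin 6):ℕ) = 0 from rfl, show ((1:Fin 6):ℕ) = 1 from rfl, show ((2:Fin 6):ℕ) = 2 from rfl, show ((3:Fin 6):ℕ) = 3 from rfl, show ((4:Fin 6):ℕ) = 4 from rfl, show ((5:Fin 6):ℕ) = 5 from rfl]

def induceInduceIso {V : Type*} (G : SimpleGraph V) {s t : Set V} (hst : s ⊆ t) :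
    G.induce s ≃g (G.induce t).induce {z : ↥t | z.1 ∈ s} where
  toEquiv :=
  { toFun := fun x => ⟨⟨x.1, hst x.2⟩, x.2⟩
    invFun := fun y => ⟨y.1.1, y.2⟩
    left_inv := fun x => rfl
    right_inv := fun y => rfl }
  map_rel_iff' := Iff.rfl

lemma tminor_aux : ∀ (n : ℕ) (A B : FinGraph), Fintype.card A.V ≤ n →
    ∀ (s : Set A.V), s ≠ Set.univ → Nonempty (B.graph ≃g A.graph.induce s) → TMinor B A := by
  intro n
  induction n with
  | zero =>
    intro A B hcard s hs _
    have hemp : IsEmpty A.V := Fintype.card_eq_zero_iff.mp (Nat.le_zero.mp hcard)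
    exact absurd (Set.eq_univ_of_forall fun x => (hemp.false x).elim) hs
  | succ n ih =>
    intro A B hcard s hs he
    obtain ⟨e⟩ := he
    classical
    obtain ⟨v, hv⟩ : ∃ v, v ∉ s := by
      by_contra h
      push_neg at h
      exact hs (Set.eq_univ_of_forall h)
    let A' : FinGraph := FinGraph.of (A.graph.induce {w | w ≠ v})
    have hstep : Step A A' := Or.inl ⟨v, Nonempty.intro (show A.graph.induce {w | w ≠ v} ≃g A.graph.induce {w | w ≠ v} from RelIso.refl _)⟩
    by_cases hall : ∀ w, w ≠ v → w ∈ s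
    · have hseq : s = {w | w ≠ v} :=
        Set.ext fun w => ⟨fun hw hwv => hv (hwv ▸ hw), hall w⟩
      rw [hseq] at e
      exact Relation.ReflTransGen.single (Or.inl ⟨v, ⟨e⟩⟩)
    · push_neg at hall
      obtain ⟨w₀, hw₀v, hw₀s⟩ := hall
      have hsub : s ⊆ {w | w ≠ v} := fun a ha hav => hv (hav ▸ ha)
      have hs' : ({z : A'.V | z.1 ∈ s}) ≠ Set.univ := by
        intro h
        exact hw₀s ((Set.eq_univ_iff_forall.mp h) ⟨w₀, hw₀v⟩)
      have e' : B.graph ≃g A'.graph.induce {z : A'.V | z.1 ∈ s} :=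
        e.trans (induceInduceIso A.graph hsub)
      have hcard' : Fintype.card A'.V ≤ n := by
        have hlt : Fintype.card A'.V < Fintype.card A.V := by
          apply Fintype.card_lt_of_injective_of_notMem (Subtype.val) Subtype.val_injective
            (b := v)
          rintro ⟨⟨w, hw⟩, h⟩
          exact hw h
        omega
      exact Relation.ReflTransGen.head hstep (ih A' B hcard' _ hs' ⟨e'⟩)

lemma tminor_of_induce (A B : FinGraph) (s : Set A.V) (hs : s ≠ Set.univ)
    (he : Nonempty (B.graph ≃g A.graph.induce s)) : TMinor B A :=
  tminor_aux (Fintype.card A.V) A B le_rfl s hs he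

noncomputable def isoOfFun {k : ℕ} {V : Type*} (M : SimpleGraph (Fin k)) (G : SimpleGraph V) (g : Fin k → V)
    (hinj : Function.Injective g) (h : ∀ i j, M.Adj i j ↔ G.Adj (g i) (g j)) :
    M ≃g G.induce (Set.range g) where
  toEquiv := Equiv.ofInjective g hinj
  map_rel_iff' := by
    intro i j
    simp only [SimpleGraph.comap_adj, Equiv.ofInjective_apply]
    exact (h i j).symm

lemma contra_template {V : Type} [Fintype V] (G' : SimpleGraph V)
    (hTP : ∀ B, ProperTMinor B (FinGraph.of G') → TPerfect B.graph)
    {k : ℕ} (M : SimpleGraph (Fin k)) (hM : ¬ TPerfect M) (hk : k < Fintype.card V)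
    (g : Fin k → V) (hinj : Function.Injective g)
    (hadj : ∀ i j, M.Adj i j ↔ G'.Adj (g i) (g j)) : False := by
  have hrange : Set.range g ≠ Set.univ := by
    intro h
    have hsurj : Function.Surjective g := Set.range_eq_univ.mp h
    have := Fintype.card_le_of_surjective g hsurj
    rw [Fintype.card_fin] at this
    omega
  have hmin : TMinor (FinGraph.of M) (FinGraph.of G') :=
    tminor_of_induce _ _ (Set.range g) hrange ⟨isoOfFun M G' g hinj hadj⟩
  exact hM (hTP (FinGraph.of M) ⟨hmin, (Fintype.card_fin k).trans_lt hk⟩)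

lemma glue {V : Type} (G' : SimpleGraph V) (M : SimpleGraph (Fin 6)) (tbl : Fin 5 → Prop)
    (hc1 : ∀ a b : Fin 5, M.Adj a.castSucc b.castSucc ↔ cyc a b)
    (hc2 : ∀ a : Fin 5, M.Adj (Fin.last 5) a.castSucc ↔ tbl a)
    (w : Fin 5 → V) (u : V) (hwinj : Function.Injective w) (hune : ∀ k, u ≠ w k)
    (hcyc : ∀ i j, G'.Adj (w i) (w j) ↔ cyc i j) (hu : ∀ k, G'.Adj u (w k) ↔ tbl k) :
    ∃ g : Fin 6 → V, Function.Injective g ∧ ∀ i j, M.Adj i j ↔ G'.Adj (g i) (g j) := by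
  refine ⟨fun i => Fin.lastCases u w i, ?_, ?_⟩
  · intro i j h
    rcases Fin.eq_castSucc_or_eq_last i with ⟨a, rfl⟩ | rfl <;>
      rcases Fin.eq_castSucc_or_eq_last j with ⟨b, rfl⟩ | rfl <;>
      simp only [Fin.lastCases_castSucc, Fin.lastCases_last] at h
    · exact congrArg _ (hwinj h)
    · exact absurd h.symm (hune a)
    · exact absurd h (hune b)
    · rfl
  · intro i j
    rcases Fin.eq_castSucc_or_eq_last i with ⟨a, rfl⟩ | rfl <;>
      rcases Fin.eq_castSucc_or_eq_last j with ⟨b, rfl⟩ | rfl <;>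
      simp only [Fin.lastCases_castSucc, Fin.lastCases_last]
    · exact (hc1 a b).trans (hcyc a b).symm
    · rw [M.adj_comm, G'.adj_comm]
      exact (hc2 a).trans (hu a).symm
    · exact (hc2 b).trans (hu b).symm
    · exact ⟨fun h => absurd rfl h.ne, fun h => absurd rfl h.ne⟩

lemma contra_hub {V : Type} [Fintype V] (G' : SimpleGraph V)
    (hTP : ∀ B, ProperTMinor B (FinGraph.of G') → TPerfect B.graph)
    (hbig : 11 ≤ Fintype.card V)
    (M : SimpleGraph (Fin 6)) (hM : ¬ TPerfect M) (tbl : Fin 5 → Prop)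
    (hc1 : ∀ a b : Fin 5, M.Adj a.castSucc b.castSucc ↔ cyc a b)
    (hc2 : ∀ a : Fin 5, M.Adj (Fin.last 5) a.castSucc ↔ tbl a)
    (w : Fin 5 → V) (u : V) (hwinj : Function.Injective w) (hune : ∀ k, u ≠ w k)
    (hcyc : ∀ i j, G'.Adj (w i) (w j) ↔ cyc i j) (hu : ∀ k, G'.Adj u (w k) ↔ tbl k) :
    False := by
  obtain ⟨g, hginj, hgadj⟩ := glue G' M tbl hc1 hc2 w u hwinj hune hcyc hu
  exact contra_template G' hTP M hM (by omega) g hginj hgadj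

lemma contra_K4 {V : Type} [Fintype V] (G' : SimpleGraph V)
    (hTP : ∀ B, ProperTMinor B (FinGraph.of G') → TPerfect B.graph)
    (hbig : 11 ≤ Fintype.card V) (a b c d : V)
    (hab : a ≠ b) (hac : a ≠ c) (had : a ≠ d) (hbc : b ≠ c) (hbd : b ≠ d) (hcd : c ≠ d)
    (Aab : G'.Adj a b) (Aac : G'.Adj a c) (Aad : G'.Adj a d)
    (Abc : G'.Adj b c) (Abd : G'.Adj b d) (Acd : G'.Adj c d) : False := by
  apply contra_template G' hTP (⊤ : SimpleGraph (Fin 4)) notTP_K4 (by omega) ![a,b,c,d]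
  · intro i j h
    fin_cases i <;> fin_cases j <;>
      simp_all [hab, hac, had, hbc, hbd, hcd, hab.symm, hac.symm, had.symm,
        hbc.symm, hbd.symm, hcd.symm]
  · intro i j
    fin_cases i <;> fin_cases j <;>
      simp [top_adj, Aab, Aac, Aad, Abc, Abd, Acd, Aab.symm, Aac.symm, Aad.symm,
        Abc.symm, Abd.symm, Acd.symm, SimpleGraph.irrefl]

abbrev rho (a : Fin 5) (ε : Bool) (k : Fin 5) : Fin 5 := a + (if ε then k else -k)
abbrev tblH3 : Fin 5 → Prop := fun k => k = 0 ∨ k = 1 ∨ k = 2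
abbrev tblH4 : Fin 5 → Prop := fun k => k ≠ 4

lemma F1 : ∀ (a : Fin 5) (ε : Bool) (i j : Fin 5), cyc (rho a ε i) (rho a ε j) ↔ cyc i j := by
  decide
lemma F2 : ∀ (a : Fin 5) (ε : Bool) (i j : Fin 5), rho a ε i = rho a ε j → i = j := by decide

lemma hc1W : ∀ a b : Fin 5, MW5.Adj a.castSucc b.castSucc ↔ cyc a b := by decide
lemma hc2W : ∀ a : Fin 5, MW5.Adj (Fin.last 5) a.castSucc ↔ True := by decide
lemma hc1H3 : ∀ a b : Fin 5, MH3.Adj a.castSucc b.castSucc ↔ cyc a b := by decide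
lemma hc2H3 : ∀ a : Fin 5, MH3.Adj (Fin.last 5) a.castSucc ↔ tblH3 a := by decide
lemma hc1H4 : ∀ a b : Fin 5, MH4.Adj a.castSucc b.castSucc ↔ cyc a b := by decide
lemma hc2H4 : ∀ a : Fin 5, MH4.Adj (Fin.last 5) a.castSucc ↔ tblH4 a := by decide

lemma Lclassify : ∀ N : Finset (Fin 5),
    (∃ j : Fin 5, j+2 ∈ N ∧ j+3 ∈ N ∧ j+1 ∉ N ∧ j+4 ∉ N) ∨
    (∃ (a : Fin 5) (ε : Bool),
      (∀ k, rho a ε k ∈ N ↔ False) ∨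
      (∀ k, rho a ε k ∈ N ↔ k = 0) ∨
      (∀ k, rho a ε k ∈ N ↔ (k = 0 ∨ k = 2)) ∨
      (∀ k, rho a ε k ∈ N ↔ tblH3 k) ∨
      (∀ k, rho a ε k ∈ N ↔ tblH4 k) ∨
      (∀ k, rho a ε k ∈ N ↔ True)) := by decide

lemma lf2inj : Function.Injective (fun k : Fin 5 => 2*k) := by decide
lemma lf2 : ∀ i j : Fin 5, ((2*i ≠ 2*j) ∧ ¬ cyc (2*i) (2*j)) ↔ cyc i j := by decide
lemma lg2inj : Function.Injective (fun k : Fin 5 => 2*(k+1)) := by decide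
lemma lg2 : ∀ i j : Fin 5, ((2*(i+1) ≠ 2*(j+1)) ∧ ¬ cyc (2*(i+1)) (2*(j+1))) ↔ cyc i j := by
  decide
lemma lg2mem : ∀ k : Fin 5, (¬ (2*(k+1) = 0)) ↔ tblH4 k := by decide
lemma lh2inj : Function.Injective (fun k : Fin 5 => 2*(k+2)) := by decide
lemma lh2 : ∀ i j : Fin 5, ((2*(i+2) ≠ 2*(j+2)) ∧ ¬ cyc (2*(i+2)) (2*(j+2))) ↔ cyc i j := by
  decide
lemma lh2mem : ∀ k : Fin 5, (¬ (2*(k+2) = 0 ∨ 2*(k+2) = 2)) ↔ tblH3 k := by decide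


/-- a core graph containing a 5-hole has at most ten vertices. -/
theorem stmt7 {V : Type} [Fintype V] (G : SimpleGraph V)
    (hc : IsCore G) (h5 : ∃ s : Finset V, IsInducedCycle G 5 s) :
    Fintype.card V ≤ 10 := by
  classical
  by_contra hbig'
  have hbig : 11 ≤ Fintype.card V := by omega
  obtain ⟨s, -, hcard5, ⟨e⟩⟩ := h5
  set v : Fin 5 → V := fun k => ((e.symm k : ↥(s : Set V)) : V) with hvdef
  have hvmem : ∀ k, v k ∈ s := fun k => by have := (e.symm k).2; rwa [Finset.mem_coe] at this
  have hvinj : Function.Injective v := fun i j h => e.symm.injective (Subtype.ext h)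
  have hvadj : ∀ i j, G.Adj (v i) (v j) ↔ cyc i j := by
    intro i j
    rw [← cycle5_adj i j]
    exact e.symm.map_adj_iff
  -- complement transfer
  have hcompl : ∀ (v'' : Fin 5 → V), Function.Injective v'' →
      (∀ i j, G.Adj (v'' i) (v'' j) ↔ cyc i j) →
      ∀ (f : Fin 5 → Fin 5), (∀ i j, (f i ≠ f j ∧ ¬ cyc (f i) (f j)) ↔ cyc i j) →
      (∀ i j, Gᶜ.Adj (v'' (f i)) (v'' (f j)) ↔ cyc i j) := by
    intro v'' hinj hadj f hf i j
    rw [compl_adj]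
    constructor
    · rintro ⟨hne, hnadj⟩
      exact (hf i j).1 ⟨fun h => hne (congrArg v'' h), fun h => hnadj ((hadj _ _).2 h)⟩
    · intro h
      obtain ⟨h1, h2⟩ := (hf i j).2 h
      exact ⟨fun hh => h1 (hinj hh), fun hh => h2 ((hadj _ _).1 hh)⟩
  -- step 1 : every outside vertex has an allowed neighborhood pattern
  have step1 : ∀ u : V, u ∉ s → ∃ j : Fin 5,
      G.Adj u (v (j+2)) ∧ G.Adj u (v (j+3)) ∧ ¬G.Adj u (v (j+1)) ∧ ¬G.Adj u (v (j+4)) := by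
    intro u hu
    have hune : ∀ k, u ≠ v k := fun k h => hu (h ▸ hvmem k)
    set N : Finset (Fin 5) := Finset.univ.filter (fun k => G.Adj u (v k)) with hNdef
    have hN : ∀ k, k ∈ N ↔ G.Adj u (v k) := fun k => by simp [hNdef]
    rcases Lclassify N with ⟨j, h2, h3, h1, h4⟩ | ⟨a, ε, hcase⟩
    · exact ⟨j, (hN _).1 h2, (hN _).1 h3, fun h => h1 ((hN _).2 h), fun h => h4 ((hN _).2 h)⟩
    exfalso
    set v' : Fin 5 → V := fun k => v (rho a ε k) with hv'def
    have hv'inj : Function.Injective v' := fun i j h => F2 a ε i j (hvinj h)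
    have hv'adj : ∀ i j, G.Adj (v' i) (v' j) ↔ cyc i j :=
      fun i j => (hvadj _ _).trans (F1 a ε i j)
    have hu'ne : ∀ k, u ≠ v' k := fun k => hune _
    have hu' : ∀ k, G.Adj u (v' k) ↔ rho a ε k ∈ N := fun k => (hN _).symm
    have hGcune : ∀ x : Fin 5 → Fin 5, ∀ k, Gᶜ.Adj u (v' (x k)) ↔ ¬ G.Adj u (v' (x k)) := by
      intro x k
      rw [compl_adj]
      exact ⟨fun h => h.2, fun h => ⟨hu'ne _, h⟩⟩
    rcases hcase with h | h | h | h | h | h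
    · -- no neighbours on the hole : wheel in the complement
      refine contra_hub Gᶜ hc.2 hbig MW5 notTP_MW5 (fun _ => True) hc1W hc2W
        (fun k => v' (2*k)) u (hv'inj.comp lf2inj) (fun k => hu'ne _)
        (hcompl v' hv'inj hv'adj (fun k => 2*k) lf2) ?_
      intro k
      rw [hGcune (fun k => 2*k) k]
      simp only [iff_true]
      intro hadj
      exact ((h (2*k)).1 ((hu' (2*k)).1 hadj))
    · -- exactly one neighbour : H4 pattern in the complement
      refine contra_hub Gᶜ hc.2 hbig MH4 notTP_MH4 tblH4 hc1H4 hc2H4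
        (fun k => v' (2*(k+1))) u (hv'inj.comp lg2inj) (fun k => hu'ne _)
        (hcompl v' hv'inj hv'adj (fun k => 2*(k+1)) lg2) ?_
      intro k
      rw [hGcune (fun k => 2*(k+1)) k, hu' (2*(k+1)), h (2*(k+1))]
      exact lg2mem k
    · -- nonadjacent pair : H3 pattern in the complement
      refine contra_hub Gᶜ hc.2 hbig MH3 notTP_MH3 tblH3 hc1H3 hc2H3
        (fun k => v' (2*(k+2))) u (hv'inj.comp lh2inj) (fun k => hu'ne _)
        (hcompl v' hv'inj hv'adj (fun k => 2*(k+2)) lh2) ?_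
      intro k
      rw [hGcune (fun k => 2*(k+2)) k, hu' (2*(k+2)), h (2*(k+2))]
      exact lh2mem k
    · -- three consecutive neighbours : H3 in G
      refine contra_hub G hc.1 hbig MH3 notTP_MH3 tblH3 hc1H3 hc2H3
        v' u hv'inj hu'ne hv'adj ?_
      intro k
      rw [hu' k, h k]
    · -- four consecutive neighbours : H4 in G
      refine contra_hub G hc.1 hbig MH4 notTP_MH4 tblH4 hc1H4 hc2H4
        v' u hv'inj hu'ne hv'adj ?_
      intro k
      rw [hu' k, h k]
    · -- all five : wheel in G
      refine contra_hub G hc.1 hbig MW5 notTP_MW5 (fun _ => True) hc1W hc2W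
        v' u hv'inj hu'ne hv'adj ?_
      intro k
      rw [hu' k, h k]
  -- step 2 : at most one outside vertex per type
  have step2 : ∀ u u' : V, u ∉ s → u' ∉ s → u ≠ u' → ∀ j : Fin 5,
      (G.Adj u (v (j+2)) ∧ G.Adj u (v (j+3)) ∧ ¬G.Adj u (v (j+1)) ∧ ¬G.Adj u (v (j+4))) →
      (G.Adj u' (v (j+2)) ∧ G.Adj u' (v (j+3)) ∧ ¬G.Adj u' (v (j+1)) ∧ ¬G.Adj u' (v (j+4))) →
      False := by
    intro u u' hu hu' huu' j ⟨ha2, ha3, hn1, hn4⟩ ⟨hb2, hb3, hm1, hm4⟩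
    have hune : ∀ k, u ≠ v k := fun k h => hu (h ▸ hvmem k)
    have hu'ne : ∀ k, u' ≠ v k := fun k h => hu' (h ▸ hvmem k)
    have hvne : ∀ c c' : Fin 5, c ≠ c' → v (j + c) ≠ v (j + c') :=
      fun c c' hcc h => hcc (add_left_cancel (hvinj h))
    by_cases hadj : G.Adj u u'
    · -- K4 in G on u, u', v (j+2), v (j+3)
      refine contra_K4 G hc.1 hbig u u' (v (j+2)) (v (j+3)) huu' (hune _) (hune _)
        (hu'ne _) (hu'ne _) (hvne 2 3 (by decide)) hadj ha2 ha3 hb2 hb3 ?_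
      exact (hvadj _ _).2 ((by decide : ∀ j : Fin 5, cyc (j+2) (j+3)) j)
    · -- K4 in Gᶜ on u, u', v (j+1), v (j+4)
      have hnc : ¬ cyc (j+1) (j+4) := (by decide : ∀ j : Fin 5, ¬ cyc (j+1) (j+4)) j
      refine contra_K4 Gᶜ hc.2 hbig u u' (v (j+1)) (v (j+4)) huu' (hune _) (hune _)
        (hu'ne _) (hu'ne _) (hvne 1 4 (by decide)) ?_ ?_ ?_ ?_ ?_ ?_
      · exact ⟨huu', hadj⟩
      · exact ⟨hune _, hn1⟩
      · exact ⟨hune _, hn4⟩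
      · exact ⟨hu'ne _, hm1⟩
      · exact ⟨hu'ne _, hm4⟩
      · exact ⟨hvne 1 4 (by decide), fun hh => hnc ((hvadj _ _).1 hh)⟩
  -- counting
  let typ : {u : V // u ∈ sᶜ} → Fin 5 := fun u =>
    Classical.choose (step1 u.1 (Finset.mem_compl.mp u.2))
  have hspec : ∀ u : {u : V // u ∈ sᶜ},
      G.Adj u.1 (v (typ u + 2)) ∧ G.Adj u.1 (v (typ u + 3)) ∧
      ¬G.Adj u.1 (v (typ u + 1)) ∧ ¬G.Adj u.1 (v (typ u + 4)) :=
    fun u => Classical.choose_spec (step1 u.1 (Finset.mem_compl.mp u.2))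
  have htyp : Function.Injective typ := by
    intro u u' h
    by_contra hne
    have h1 := hspec u
    have h2 := hspec u'
    rw [h] at h1
    exact step2 u.1 u'.1 (Finset.mem_compl.mp u.2) (Finset.mem_compl.mp u'.2)
      (fun hh => hne (Subtype.ext hh)) _ h1 h2
  have hle : Fintype.card {u : V // u ∈ sᶜ} ≤ 5 := by
    have := Fintype.card_le_of_injective typ htyp
    simpa using this
  have hcc : (sᶜ : Finset V).card = Fintype.card V - s.card := Finset.card_compl s
  rw [← Fintype.card_coe] at hcc
  omega

end TP
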